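/- Let ρ be the 4×4 density matrix of the two-qubit pure state |ψ⟩ = (1/(2√2))[(κ₁+κ₂)|↓↓⟩ + i(κ₁−κ₂)|↑↓⟩ + i(κ₁−κ₂)|↓↑⟩ − (κ₁+κ₂)|↑↑⟩] with |κ₁| = |κ₂| = 1. Then the partial transpose of ρ with respect to the second qubit has eigenvalues {−1/2, 1/2, 1/2, 1/2}; hence the negativity N(ρ) = (‖ρ^{T_B}‖₁ − 1)/2 equals 1/2 and the log-negativity E_N(ρ) = log₂‖ρ^{T_B}‖₁ equals 1. -/

import Mathlib

open Complex Polynomial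

/-- The two-qubit state with general unit-modulus coefficients κ₁, κ₂. -/
noncomputable def psiKappa (κ1 κ2 : ℂ) : Fin 2 × Fin 2 → ℂ :=
  fun p =>
    (1 / (2 * (Real.sqrt 2 : ℂ))) *
      (![![κ1 + κ2, Complex.I * (κ1 - κ2)],
         ![Complex.I * (κ1 - κ2), -(κ1 + κ2)]] p.1 p.2)

noncomputable def rhoKappa (κ1 κ2 : ℂ) : Matrix (Fin 2 × Fin 2) (Fin 2 × Fin 2) ℂ :=
  Matrix.of fun a b => psiKappa κ1 κ2 a * (starRingEnd ℂ) (psiKappa κ1 κ2 b)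

/-- Partial transpose on the second qubit: (ρ^{T_B})_{(a,b),(c,d)} = ρ_{(a,d),(c,b)}. -/
noncomputable def ptB (ρ : Matrix (Fin 2 × Fin 2) (Fin 2 × Fin 2) ℂ) :
    Matrix (Fin 2 × Fin 2) (Fin 2 × Fin 2) ℂ :=
  Matrix.of fun a c => ρ (a.1, c.2) (c.1, a.2)

private lemma charpolyAux (a b c : ℂ) (hA : a + c = 1/2) (hB : b^2 = a*c) :
    (!![a,b,b,c; b,c,-a,-b; b,-a,c,-b; c,-b,-b,a]).charpoly
      = (X + C (1/2)) * (X - C (1/2))^3 := by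
  have hA' : C a + C c = C (1/2 : ℂ) := by rw [← C_add, hA]
  have hB' : (C b)^2 = C a * C c := by rw [← C_pow, hB, C_mul]
  rw [Matrix.charpoly]
  rw [show Matrix.charmatrix (!![a,b,b,c; b,c,-a,-b; b,-a,c,-b; c,-b,-b,a]) =
    !![X - C a, -C b, -C b, -C c;
       -C b, X - C c, C a, C b;
       -C b, C a, X - C c, C b;
       -C c, C b, C b, X - C a] from by
    rw [← Matrix.ext_iff]; intro i j
    fin_cases i <;> fin_cases j <;>
      simp [Matrix.charmatrix_apply, Matrix.diagonal_apply, Fin.ext_iff] <;> omega]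
  rw [Matrix.det_succ_row_zero]
  simp [Fin.sum_univ_succ, Matrix.det_fin_three, Fin.succAbove, Fin.castSucc,
    Fin.castAdd, Fin.castLE]
  ring_nf
  linear_combination
    (-2*X^3 + 2*(C (1/2:ℂ))^2*X - (C (1/2:ℂ))^3 + 2*C c*(C (1/2:ℂ))*X - C c*(C (1/2:ℂ))^2
      + 2*(C c)^2*X - (C c)^2*(C (1/2:ℂ)) - (C c)^3 + 8*(C b)^2*X - 4*(C b)^2*(C (1/2:ℂ))
      - 4*(C b)^2*C c + 2*C a*(C (1/2:ℂ))*X - C a*(C (1/2:ℂ))^2 - 4*C a*C c*X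
      + 2*C a*C c*(C (1/2:ℂ)) + C a*(C c)^2 - 4*C a*(C b)^2 + 2*(C a)^2*X
      - (C a)^2*(C (1/2:ℂ)) + (C a)^2*C c - (C a)^3) * hA'
    + (-4*X^2 + 8*(C (1/2:ℂ))*X - 4*(C (1/2:ℂ))^2) * hB'


/-- the partial transpose has eigenvalues {−1/2, 1/2, 1/2, 1/2}; hence the
    negativity (‖ρ^{T_B}‖₁ − 1)/2 = 1/2 and the log-negativity log₂‖ρ^{T_B}‖₁ = 1. -/
theorem ptB_eigenvalues_negativity (κ1 κ2 : ℂ)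
    (h1 : ‖κ1‖ = 1) (h2 : ‖κ2‖ = 1) :
    (ptB (rhoKappa κ1 κ2)).charpoly.roots = ({-(1/2 : ℂ), 1/2, 1/2, 1/2} : Multiset ℂ) ∧
    (((ptB (rhoKappa κ1 κ2)).charpoly.roots.map (fun z : ℂ => ‖z‖)).sum - 1) / 2 = 1/2 ∧
    Real.logb 2 (((ptB (rhoKappa κ1 κ2)).charpoly.roots.map (fun z : ℂ => ‖z‖)).sum) = 1 := by
  have hk1 : κ1 ≠ 0 := by intro h; rw [h] at h1; simp at h1
  have hk2 : κ2 ≠ 0 := by intro h; rw [h] at h2; simp at h2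
  have hc1 : (starRingEnd ℂ) κ1 = κ1⁻¹ := by
    have h : κ1 * (starRingEnd ℂ) κ1 = 1 := by
      rw [Complex.mul_conj, Complex.normSq_eq_norm_sq, h1]; norm_num
    field_simp at h ⊢
    linear_combination h
  have hc2 : (starRingEnd ℂ) κ2 = κ2⁻¹ := by
    have h : κ2 * (starRingEnd ℂ) κ2 = 1 := by
      rw [Complex.mul_conj, Complex.normSq_eq_norm_sq, h2]; norm_num
    field_simp at h ⊢
    linear_combination h
  have hsq : ((Real.sqrt 2 : ℝ) : ℂ) * ((Real.sqrt 2 : ℝ) : ℂ) = 2 := by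
    norm_cast
    exact Real.mul_self_sqrt (by norm_num)
  have hsqne : ((Real.sqrt 2 : ℝ) : ℂ) ≠ 0 := by
    intro h; rw [h] at hsq; norm_num at hsq
  have hconj : ∀ q, (starRingEnd ℂ) (psiKappa κ1 κ2 q) = psiKappa κ1 κ2 q / (κ1 * κ2) := by
    intro q
    fin_cases q <;>
      simp [psiKappa, map_mul, map_add, map_sub, map_neg, map_div₀, Complex.conj_I,
        Complex.conj_ofReal, map_ofNat, hc1, hc2] <;>
      field_simp <;> ring
  have key : ∀ p q : Fin 2 × Fin 2, psiKappa κ1 κ2 p * (starRingEnd ℂ) (psiKappa κ1 κ2 q) =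
      (![![κ1 + κ2, Complex.I * (κ1 - κ2)],
         ![Complex.I * (κ1 - κ2), -(κ1 + κ2)]] p.1 p.2) *
      (![![κ1 + κ2, Complex.I * (κ1 - κ2)],
         ![Complex.I * (κ1 - κ2), -(κ1 + κ2)]] q.1 q.2) / (8 * (κ1 * κ2)) := by
    intro p q
    rw [hconj q]
    show (1 / (2 * (Real.sqrt 2 : ℂ))) * _ * ((1 / (2 * (Real.sqrt 2 : ℂ))) * _ / (κ1 * κ2)) = _
    field_simp
    rw [show ((Real.sqrt 2 : ℝ) : ℂ)^2 = 2 by rw [sq]; exact hsq]; ring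
  have hA : (κ1+κ2)^2/(8*(κ1*κ2)) + (Complex.I*(κ1-κ2))^2/(8*(κ1*κ2)) = 1/2 := by
    have huv : (κ1+κ2)^2 + (Complex.I*(κ1-κ2))^2 = 4*(κ1*κ2) := by
      linear_combination (κ1-κ2)^2 * Complex.I_sq
    rw [← add_div, huv, div_eq_iff (by simp [hk1, hk2])]
    ring
  have hB : ((κ1+κ2)*(Complex.I*(κ1-κ2))/(8*(κ1*κ2)))^2
      = ((κ1+κ2)^2/(8*(κ1*κ2))) * ((Complex.I*(κ1-κ2))^2/(8*(κ1*κ2))) := by ring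
  set a : ℂ := (κ1+κ2)^2/(8*(κ1*κ2))
  set b : ℂ := (κ1+κ2)*(Complex.I*(κ1-κ2))/(8*(κ1*κ2))
  set c : ℂ := (Complex.I*(κ1-κ2))^2/(8*(κ1*κ2))
  have hmat : ptB (rhoKappa κ1 κ2) = Matrix.reindex finProdFinEquiv.symm finProdFinEquiv.symm
      !![a,b,b,c; b,c,-a,-b; b,-a,c,-b; c,-b,-b,a] := by
    rw [← Matrix.ext_iff]; intro p q
    have e1 : ptB (rhoKappa κ1 κ2) p q
        = psiKappa κ1 κ2 (p.1, q.2) * (starRingEnd ℂ) (psiKappa κ1 κ2 (q.1, p.2)) := rfl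
    rw [e1, key]
    fin_cases p <;> fin_cases q <;>
      · simp [Matrix.reindex_apply, finProdFinEquiv]
        try ring
  have hcp : (ptB (rhoKappa κ1 κ2)).charpoly = (X + C (1/2:ℂ)) * (X - C (1/2:ℂ))^3 := by
    rw [hmat, Matrix.charpoly_reindex]
    exact charpolyAux a b c hA hB
  have hroots : (ptB (rhoKappa κ1 κ2)).charpoly.roots
      = ({-(1/2 : ℂ), 1/2, 1/2, 1/2} : Multiset ℂ) := by
    rw [hcp, show (X + C (1/2:ℂ)) = X - C (-(1/2):ℂ) by rw [map_neg]; ring]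
    rw [roots_mul (mul_ne_zero (X_sub_C_ne_zero _) (pow_ne_zero _ (X_sub_C_ne_zero _))),
      roots_pow, roots_X_sub_C, roots_X_sub_C]
    rfl
  have h12 : ‖(1/2 : ℂ)‖ = 1/2 := by
    rw [show (1/2:ℂ) = ((1/2:ℝ):ℂ) by norm_num, Complex.norm_real]; norm_num
  have hn12 : ‖(-(1/2) : ℂ)‖ = 1/2 := by
    rw [show (-(1/2):ℂ) = ((-(1/2):ℝ):ℂ) by norm_num, Complex.norm_real]; norm_num
  have hsum : (((ptB (rhoKappa κ1 κ2)).charpoly.roots.map (fun z : ℂ => ‖z‖)).sum) = 2 := by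
    rw [hroots]
    simp [hn12, h12]
    norm_num
  refine ⟨hroots, ?_, ?_⟩ <;> rw [hsum]
  · norm_num
  · exact Real.logb_self_eq_one (by norm_num)
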